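/- In R-Wythoff, for every nonnegative integer a and every nonnegative integer c, there exists a nonnegative integer b such that the Sprague–Grundy value G_R(a,b) = c. -/

import Mathlib

noncomputable section

/-- The golden ratio. -/
def phi : ℝ := (1 + Real.sqrt 5) / 2

/-- Minimum excluded value of a set of naturals. -/
def mex (S : Set ℕ) : ℕ := sInf {n | n ∉ S}

/-- Sort a pair of naturals into nondecreasing order. -/
def sortPair (p : ℕ × ℕ) : ℕ × ℕ := (min p.1 p.2, max p.1 p.2)

/-- Moves of R-Wythoff (positions are unordered pairs of pile sizes): remove a
positive number of tokens from the larger pile (either pile if equal), or an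
equal positive number of tokens from both piles. -/
def RMove (p q : ℕ × ℕ) : Prop :=
  (∃ t < max p.1 p.2, sortPair q = sortPair (min p.1 p.2, t)) ∨
  (∃ k, 0 < k ∧ k ≤ min p.1 p.2 ∧ sortPair q = (min p.1 p.2 - k, max p.1 p.2 - k))

lemma RMove.sum_lt {p q : ℕ × ℕ} (h : RMove p q) : q.1 + q.2 < p.1 + p.2 := by
  rcases h with ⟨t, ht, hq⟩ | ⟨k, hk0, hk, hq⟩ <;>
  · simp only [sortPair, Prod.mk.injEq] at hq
    omega

/-- Sprague–Grundy function of R-Wythoff. -/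
noncomputable def grundyR : ℕ × ℕ → ℕ
  | p => mex {v | ∃ q, ∃ _ : RMove p q, grundyR q = v}
termination_by p => p.1 + p.2
decreasing_by exact RMove.sum_lt (by assumption)

/-- P-positions of R-Wythoff: a position is P iff every move leads to a
non-P (i.e. N) position. -/
def RPPos : ℕ × ℕ → Prop
  | p => ∀ q, RMove p q → ¬ RPPos q
termination_by p => p.1 + p.2
decreasing_by exact RMove.sum_lt (by assumption)

lemma grundyR_def (p : ℕ × ℕ) :
    grundyR p = mex {v | ∃ q, ∃ _ : RMove p q, grundyR q = v} := by
  rw [grundyR]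

lemma followerSet_finite (p : ℕ × ℕ) :
    {v | ∃ q, ∃ _ : RMove p q, grundyR q = v}.Finite := by
  apply Set.Finite.subset
    ((((Set.finite_Iio (p.1 + p.2)).prod (Set.finite_Iio (p.1 + p.2))).image grundyR))
  rintro v ⟨q, hq, rfl⟩
  have := hq.sum_lt
  exact ⟨q, ⟨by simp; omega, by simp; omega⟩, rfl⟩

lemma mex_not_mem {S : Set ℕ} (hS : S.Finite) : mex S ∉ S := by
  have h : {n | n ∉ S}.Nonempty := hS.infinite_compl.nonempty
  exact Nat.sInf_mem h

lemma mex_le {S : Set ℕ} {c : ℕ} (h : c ∉ S) : mex S ≤ c := Nat.sInf_le h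

lemma grundyR_follower_ne {p q : ℕ × ℕ} (h : RMove p q) : grundyR p ≠ grundyR q := by
  rw [grundyR_def p]
  intro hvq
  exact mex_not_mem (followerSet_finite p) (hvq ▸ ⟨q, h, rfl⟩)

lemma RMove_swap (x y : ℕ) (q : ℕ × ℕ) : RMove (x, y) q ↔ RMove (y, x) q := by
  simp [RMove, Nat.max_comm x y, Nat.min_comm x y]

lemma grundyR_swap (x y : ℕ) : grundyR (x, y) = grundyR (y, x) := by
  rw [grundyR_def, grundyR_def]
  congr 1
  ext v
  simp only [Set.mem_setOf_eq]
  constructor <;> rintro ⟨q, hq, rfl⟩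
  · exact ⟨q, (RMove_swap x y q).mp hq, rfl⟩
  · exact ⟨q, (RMove_swap x y q).mpr hq, rfl⟩

lemma grundyR_sortPair (p : ℕ × ℕ) : grundyR (sortPair p) = grundyR p := by
  rcases p with ⟨x, y⟩
  rcases le_total x y with h | h
  · simp [sortPair, min_eq_left h, max_eq_right h]
  · simp only [sortPair]
    rw [min_eq_right h, max_eq_left h, grundyR_swap]

lemma rmove_row {r b t : ℕ} (hr : r < b) (ht : t < b) : RMove (r, b) (r, t) := by
  left
  refine ⟨t, ?_, ?_⟩
  · simpa [max_eq_right hr.le] using ht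
  · simp [min_eq_left hr.le]

lemma row_ne {r y y' : ℕ} (hy' : r < y') (h : y < y') :
    grundyR (r, y') ≠ grundyR (r, y) :=
  grundyR_follower_ne (rmove_row hy' h)

lemma row_eq {r y y' : ℕ} (hy : r < y) (hy' : r < y')
    (h : grundyR (r, y) = grundyR (r, y')) : y = y' := by
  rcases lt_trichotomy y y' with hlt | heq | hgt
  · exact absurd h.symm (row_ne hy' hlt)
  · exact heq
  · exact absurd h (row_ne hy hgt)

lemma stepA {a c : ℕ} (H : ∀ b, grundyR (a, b) ≠ c) {b : ℕ} (hb : a < b) :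
    grundyR (a, b) ≤ c ∨ ∃ k, 1 ≤ k ∧ k ≤ a ∧ grundyR (a - k, b - k) = c := by
  have hmin : min (a, b).1 (a, b).2 = a := min_eq_left hb.le
  have hmax : max (a, b).1 (a, b).2 = b := max_eq_right hb.le
  by_cases hc : c ∈ {v | ∃ q, ∃ _ : RMove (a, b) q, grundyR q = v}
  · obtain ⟨q, hq, hqc⟩ := hc
    rcases hq with ⟨t, ht, hs⟩ | ⟨k, hk0, hkle, hs⟩
    · exfalso
      rw [hmin] at hs
      have hq' : grundyR q = grundyR (a, t) := by
        rw [← grundyR_sortPair q, hs, grundyR_sortPair]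
      rw [hq'] at hqc
      exact H t hqc
    · rw [hmin] at hs hkle
      rw [hmax] at hs
      refine Or.inr ⟨k, hk0, hkle, ?_⟩
      have hq' : grundyR q = grundyR (a - k, b - k) := by
        rw [← grundyR_sortPair q, hs]
      rw [← hq']; exact hqc
  · left
    rw [grundyR_def]
    exact mex_le hc

lemma row_card_le (r c M : ℕ) :
    ((Finset.range M).filter (fun y => grundyR (r, y) = c)).card ≤ r + 2 := by
  set F := (Finset.range M).filter (fun y => grundyR (r, y) = c) with hF
  by_cases h : ∃ y₀ ∈ F, r < y₀
  · obtain ⟨y₀, hy₀F, hy₀⟩ := h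
    have hc₀ : grundyR (r, y₀) = c := (Finset.mem_filter.mp hy₀F).2
    have hsub : F ⊆ insert y₀ (Finset.range (r + 1)) := by
      intro y hy
      have hcy : grundyR (r, y) = c := (Finset.mem_filter.mp hy).2
      rcases lt_or_ge r y with hry | hry
      · have : y = y₀ := row_eq hry hy₀ (hcy.trans hc₀.symm)
        simp [this]
      · simp only [Finset.mem_insert, Finset.mem_range]
        omega
    calc F.card ≤ (insert y₀ (Finset.range (r + 1))).card := Finset.card_le_card hsub
      _ ≤ (Finset.range (r + 1)).card + 1 := Finset.card_insert_le _ _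
      _ = r + 2 := by simp
  · push_neg at h
    have hsub : F ⊆ Finset.range (r + 1) := by
      intro y hy
      have := h y hy
      simp only [Finset.mem_range]
      omega
    calc F.card ≤ (Finset.range (r + 1)).card := Finset.card_le_card hsub
      _ ≤ r + 2 := by simp

/-- Every Sprague–Grundy value occurs in every row of R-Wythoff. -/
theorem RWythoff_row (a c : ℕ) : ∃ b : ℕ, grundyR (a, b) = c := by
  by_contra Hc
  push_neg at Hc
  set N := c + 1 + a * (a + 2) + 1 with hN
  set B := Finset.Icc (a + 1) (a + N) with hB
  have hBcard : B.card = N := by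
    rw [hB, Nat.card_Icc]; omega
  set G1 := B.filter (fun b => grundyR (a, b) ≤ c) with hG1def
  set G2 := B.filter (fun b => ¬ grundyR (a, b) ≤ c) with hG2def
  have hsplit : G1.card + G2.card = B.card :=
    Finset.card_filter_add_card_filter_not _
  have hmemB : ∀ b ∈ B, a < b := by
    intro b hb
    rw [hB, Finset.mem_Icc] at hb
    omega
  have hG1 : G1.card ≤ c + 1 := by
    have := Finset.card_le_card_of_injOn (fun b => grundyR (a, b))
      (s := G1) (t := Finset.range (c + 1))
      (fun b hb => by
        have hb' := Finset.mem_filter.mp hb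
        simp only [Finset.mem_coe, Finset.mem_range]
        omega)
      (fun b1 hb1 b2 hb2 h => by
        exact row_eq (hmemB _ (Finset.mem_filter.mp hb1).1)
          (hmemB _ (Finset.mem_filter.mp hb2).1) h)
    simpa using this
  set P := (Finset.Icc 1 a ×ˢ Finset.range (a + N)).filter
      (fun kp => grundyR (a - kp.1, kp.2) = c) with hPdef
  have key : ∀ b, ∃ kk, b ∈ G2 →
      1 ≤ kk ∧ kk ≤ a ∧ grundyR (a - kk, b - kk) = c := by
    intro b
    by_cases hb : b ∈ G2
    · have hb' := Finset.mem_filter.mp hb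
      rcases stepA Hc (hmemB _ hb'.1) with h | ⟨kk, h1, h2, h3⟩
      · exact absurd h hb'.2
      · exact ⟨kk, fun _ => ⟨h1, h2, h3⟩⟩
    · exact ⟨1, fun h => absurd h hb⟩
  choose k hk using key
  have hG2 : G2.card ≤ P.card := by
    apply Finset.card_le_card_of_injOn (fun b => (k b, b - k b))
    · intro b hb
      obtain ⟨h1, h2, h3⟩ := hk b hb
      have hbB : a + 1 ≤ b ∧ b ≤ a + N := by
        have := (Finset.mem_filter.mp hb).1
        rwa [hB, Finset.mem_Icc] at this
      rw [hPdef, Finset.mem_coe, Finset.mem_filter, Finset.mem_product]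
      refine ⟨⟨Finset.mem_Icc.mpr ⟨h1, h2⟩, Finset.mem_range.mpr (by dsimp only; omega)⟩, h3⟩
    · intro b1 hb1 b2 hb2 h
      obtain ⟨h11, h12, _⟩ := hk b1 hb1
      obtain ⟨h21, h22, _⟩ := hk b2 hb2
      have hab1 := hmemB _ (Finset.mem_filter.mp hb1).1
      have hab2 := hmemB _ (Finset.mem_filter.mp hb2).1
      have hk12 : k b1 = k b2 := congrArg Prod.fst h
      have hs12 : b1 - k b1 = b2 - k b2 := congrArg Prod.snd h
      omega
  have hP : P.card ≤ a * (a + 2) := by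
    have hsub : P ⊆ (Finset.Icc 1 a).biUnion (fun kk =>
        ((Finset.range (a + N)).filter (fun y => grundyR (a - kk, y) = c)).image
          (fun y => (kk, y))) := by
      intro kp hkp
      rw [hPdef, Finset.mem_filter, Finset.mem_product] at hkp
      obtain ⟨⟨hk1, hk2⟩, hk3⟩ := hkp
      rw [Finset.mem_biUnion]
      exact ⟨kp.1, hk1, Finset.mem_image.mpr ⟨kp.2, Finset.mem_filter.mpr ⟨hk2, hk3⟩, rfl⟩⟩
    calc P.card ≤ _ := Finset.card_le_card hsub
      _ ≤ ∑ kk ∈ Finset.Icc 1 a,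
          (((Finset.range (a + N)).filter (fun y => grundyR (a - kk, y) = c)).image
            (fun y => (kk, y))).card := Finset.card_biUnion_le
      _ ≤ ∑ kk ∈ Finset.Icc 1 a, (a + 2) := by
          apply Finset.sum_le_sum
          intro kk hkk
          have h1 := Finset.card_image_le (s :=
            (Finset.range (a + N)).filter (fun y => grundyR (a - kk, y) = c))
            (f := fun y => (kk, y))
          have h2 := row_card_le (a - kk) c (a + N)
          have hkk' := Finset.mem_Icc.mp hkk
          omega
      _ = a * (a + 2) := by
          rw [Finset.sum_const, Nat.card_Icc]
          simp [Nat.mul_comm]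
  omega

end
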